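/- arXiv:1911.10237 — 2 statements merged into one kernel-verified Lean document; each statement's English description precedes it below -/
import Mathlib

section
/- Let Z be a standard normal random variable and define T = Z² if Z > 0 and T = 0 if Z ≤ 0 (the likelihood ratio statistic for testing μ = 0 vs μ > 0 at the boundary). Then for every c > 0, P(T > c) = (1/2)·P(χ²₁ > c); i.e., T is distributed as the mixture (1/2)δ₀ + (1/2)χ²₁. -/
open MeasureTheory ProbabilityTheory

lemma gaussian_neg_symm (s : Set ℝ) (hs : MeasurableSet s) :
    gaussianReal 0 1 ((fun x => -x) ⁻¹' s) = gaussianReal 0 1 s := by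
  have h := gaussianReal_map_const_mul (μ := 0) (v := 1) (-1)
  have h1 : (NNReal.mk ((-1:ℝ)^2) (sq_nonneg _) * 1) = 1 := by
    ext; norm_num
  rw [h1] at h
  simp only [mul_zero] at h
  have hmap : (gaussianReal 0 1).map (fun x => -x) = gaussianReal 0 1 := by
    simpa [neg_one_mul] using h
  conv_rhs => rw [← hmap]
  rw [Measure.map_apply measurable_neg hs]

/-- Chernoff's boundary result: if `Z` is standard normal and `T = Z²·1{Z>0}`
(the LRT statistic for `μ = 0` vs `μ > 0` at the boundary), then for every `c > 0`,
`P(T > c) = (1/2)·P(χ²₁ > c)`, where `χ²₁` is represented as `Z²`. -/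
theorem chernoff_half_chisq {Ω : Type*} [MeasurableSpace Ω] (μ : Measure Ω)
    [IsProbabilityMeasure μ] (Z : Ω → ℝ) (hZ : Measurable Z)
    (hlaw : μ.map Z = gaussianReal 0 1)
    (T : Ω → ℝ) (hT : ∀ ω, T ω = if 0 < Z ω then (Z ω) ^ 2 else 0) :
    ∀ c > (0 : ℝ), μ {ω | c < T ω} = (1 / 2) * μ {ω | c < (Z ω) ^ 2} := by
  intro c hc
  set s := Real.sqrt c with hs
  have hs0 : 0 < s := Real.sqrt_pos.mpr hc
  have hsq : s ^ 2 = c := Real.sq_sqrt hc.le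
  -- {c < T} = Z ⁻¹' {s < x}
  have hTset : {ω | c < T ω} = Z ⁻¹' {x | s < x} := by
    ext ω
    simp only [Set.mem_setOf_eq, Set.mem_preimage, hT ω]
    constructor
    · intro h
      by_cases hz : 0 < Z ω
      · rw [if_pos hz] at h
        nlinarith
      · rw [if_neg hz] at h; linarith
    · intro h
      have hz : 0 < Z ω := lt_trans hs0 h
      rw [if_pos hz]
      nlinarith
  have hZsq : {ω | c < (Z ω) ^ 2} = Z ⁻¹' {x | c < x ^ 2} := rfl
  have hm1 : MeasurableSet {x : ℝ | s < x} := measurableSet_Ioi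
  have hm2 : MeasurableSet {x : ℝ | c < x ^ 2} :=
    measurableSet_lt measurable_const (measurable_id.pow_const 2)
  have key1 : μ {ω | c < T ω} = gaussianReal 0 1 {x | s < x} := by
    rw [hTset, ← Measure.map_apply hZ hm1, hlaw]
  have hsplit : {x : ℝ | c < x ^ 2} = {x | s < x} ∪ {x | x < -s} := by
    ext x
    simp only [Set.mem_setOf_eq, Set.mem_union]
    constructor
    · intro h
      rcases le_or_gt x 0 with hx | hx
      · right; nlinarith
      · left; nlinarith
    · rintro (h | h) <;> nlinarith
  have hneg : gaussianReal 0 1 {x | x < -s} = gaussianReal 0 1 {x | s < x} := by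
    have : (fun x : ℝ => -x) ⁻¹' {x | s < x} = {x | x < -s} := by
      ext x; simp only [Set.mem_preimage, Set.mem_setOf_eq]; constructor <;> intro <;> linarith
    rw [← this, gaussian_neg_symm _ hm1]
  have key2 : μ {ω | c < (Z ω) ^ 2} = 2 * gaussianReal 0 1 {x | s < x} := by
    have hdisj : Disjoint {x : ℝ | s < x} {x : ℝ | x < -s} := by
      rw [Set.disjoint_left]
      intro x h1 h2
      simp only [Set.mem_setOf_eq] at h1 h2
      linarith
    rw [hZsq, ← Measure.map_apply hZ hm2, hlaw, hsplit,
      measure_union hdisj (measurableSet_lt measurable_id measurable_const), hneg, two_mul]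
  rw [key1, key2, ← mul_assoc]
  rw [one_div, ENNReal.inv_mul_cancel two_ne_zero ENNReal.ofNat_ne_top, one_mul]
end

section
/- Identifiability when μ > 0: in the same mixture model p_{μ,γ}(x) = (β/(μ+β))B(x) + (μ/(μ+β))φ(x−γ) with B a polynomial density on an interval, if (μ,γ) ≠ (μ',γ') with μ, μ' > 0 then p_{μ,γ} ≠ p_{μ',γ'} as functions. -/
/-- Identifiability when `μ > 0`: in the mixture model
`p_{μ,γ} = (β/(μ+β))·B + (μ/(μ+β))·φ(·−γ)` with `φ` the standard normal density
and `B` a polynomial density supported on an interval `[s,t]`, distinct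
parameters `(μ,γ) ≠ (μ',γ')` with `μ, μ' > 0` give distinct densities. -/
theorem identifiable_pos_signal (β s t : ℝ) (hβ : 0 < β) (P : Polynomial ℝ)
    (B : ℝ → ℝ) (hB : ∀ x, B x = if x ∈ Set.Icc s t then P.eval x else 0)
    (hB0 : ∀ x, 0 ≤ B x) (hB1 : ∫ x, B x = 1)
    (φ : ℝ → ℝ) (hφ : ∀ x, φ x = (Real.sqrt (2 * Real.pi))⁻¹ * Real.exp (-x ^ 2 / 2))
    (p : ℝ → ℝ → ℝ → ℝ)
    (hp : ∀ μ γ x, p μ γ x = (β / (μ + β)) * B x + (μ / (μ + β)) * φ (x - γ))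
    (μ μ' γ γ' : ℝ) (hμ : 0 < μ) (hμ' : 0 < μ') (hne : (μ, γ) ≠ (μ', γ')) :
    p μ γ ≠ p μ' γ' := by
  intro h
  have hμβ : 0 < μ + β := by linarith
  have hμ'β : 0 < μ' + β := by linarith
  set a : ℝ := μ / (μ + β) with ha_def
  set a' : ℝ := μ' / (μ' + β) with ha'_def
  have ha : 0 < a := div_pos hμ hμβ
  have ha' : 0 < a' := div_pos hμ' hμ'β
  have hc : (0:ℝ) < (Real.sqrt (2 * Real.pi))⁻¹ := by
    have : 0 < Real.sqrt (2 * Real.pi) :=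
      Real.sqrt_pos.mpr (by positivity)
    positivity
  have key : ∀ x, t < x →
      Real.log a - (x - γ) ^ 2 / 2 = Real.log a' - (x - γ') ^ 2 / 2 := by
    intro x hx
    have hx1 := congrFun h x
    rw [hp, hp, hB] at hx1
    have hnot : x ∉ Set.Icc s t := by
      simp [Set.mem_Icc]; intro _; linarith
    rw [if_neg hnot] at hx1
    rw [hφ, hφ] at hx1
    have h2 : a * Real.exp (-(x - γ) ^ 2 / 2) = a' * Real.exp (-(x - γ') ^ 2 / 2) := by
      have := hx1
      field_simp at this ⊢
      rw [ha_def, ha'_def]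
      field_simp
      nlinarith [this, Real.exp_pos (-(x - γ) ^ 2 / 2), Real.exp_pos (-(x - γ') ^ 2 / 2)]
    have h3 := congrArg Real.log h2
    rw [Real.log_mul (ne_of_gt ha) (Real.exp_ne_zero _),
        Real.log_mul (ne_of_gt ha') (Real.exp_ne_zero _),
        Real.log_exp, Real.log_exp] at h3
    linarith
  have e1 := key (t + 1) (by linarith)
  have e2 := key (t + 2) (by linarith)
  have hγ : γ = γ' := by nlinarith [e1, e2]
  subst hγ
  have hlog : Real.log a = Real.log a' := by linarith [e1]
  have haa : a = a' := by
    have := congrArg Real.exp hlog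
    rwa [Real.exp_log ha, Real.exp_log ha'] at this
  have hμμ : μ = μ' := by
    rw [ha_def, ha'_def, div_eq_div_iff (ne_of_gt hμβ) (ne_of_gt hμ'β)] at haa
    nlinarith [haa]
  exact hne (by simp [hμμ])
end
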